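/- Let W be a finite product ∏_{p ≤ w} p^k of prime powers (k ≥ 2), let Z(W) = {a ∈ ℤ/Wℤ : a is a k-th power residue, gcd(a,W)=1}, and suppose (W, s') is a Waring pair for all s' ≥ s₀ where s₀ := 8kω(k)+2k+2. Let f : Z(W) → [0,1) satisfy 𝔼_{b ∈ Z(W)} f(b) > 1/2, and let s ≥ 2s₀. Then for every n ∈ ℤ/Wℤ with n ≡ s (mod gcd(R_k, W)), there exist b₁,…,b_s ∈ Z(W) with n = b₁+⋯+b_s in ℤ/Wℤ, f(bᵢ) > 0 for all i, and f(b₁)+⋯+f(b_s) > s/2. -/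
import Mathlib


open Finset

/-- `p^(tau k p)` exactly divides `k`. -/
def tau (k p : ℕ) : ℕ := k.factorization p

def eta (k p : ℕ) : ℕ := if p = 2 ∧ 0 < tau k p then tau k p + 2 else tau k p + 1

/-- `R_k = ∏_{(p-1) ∣ k} p^(eta k p)` (all such primes satisfy `p ≤ k+1`). -/
def Rk (k : ℕ) : ℕ :=
  ∏ p ∈ (Finset.range (k + 2)).filter (fun p => p.Prime ∧ (p - 1) ∣ k), p ^ eta k p

/-- The set of `k`-th power residues mod `q` that are coprime to `q`. -/
def Zset (k q : ℕ) : Set (ZMod q) := {a | (∃ t, t ^ k = a) ∧ IsUnit a}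

/-- The `s`-fold sumset of `A ⊆ ℤ/qℤ`. -/
def sumset (q s : ℕ) (A : Set (ZMod q)) : Set (ZMod q) :=
  {x | ∃ f : Fin s → ZMod q, (∀ i, f i ∈ A) ∧ ∑ i, f i = x}

/-- `(q, s)` is a Waring pair. -/
def WaringPair (k q s : ℕ) : Prop :=
  ∀ A : Set (ZMod q), A ⊆ Zset k q → ((Zset k q).ncard : ℝ) / 2 < (A.ncard : ℝ) →
    sumset q s A =
      {a : ZMod q |
        ZMod.castHom (Nat.gcd_dvd_right (Rk k) q) (ZMod (Nat.gcd (Rk k) q)) a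
          = (s : ZMod (Nat.gcd (Rk k) q))}

theorem stmt13 (k : ℕ) (hk : 2 ≤ k) (w : ℕ) (W : ℕ) [NeZero W]
    (hW : W = ∏ p ∈ (Finset.range (w + 1)).filter Nat.Prime, p ^ k)
    (hWaring : ∀ s' : ℕ, 8 * k * k.primeFactors.card + 2 * k + 2 ≤ s' → WaringPair k W s')
    (f : ZMod W → ℝ) (hf0 : ∀ b ∈ Zset k W, 0 ≤ f b) (hf1 : ∀ b ∈ Zset k W, f b < 1)
    (hmean : 1 / 2 < (∑ b ∈ (Set.toFinite (Zset k W)).toFinset, f b) / ((Zset k W).ncard : ℝ))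
    (s : ℕ) (hs : 2 * (8 * k * k.primeFactors.card + 2 * k + 2) ≤ s)
    (n : ZMod W)
    (hn : ZMod.castHom (Nat.gcd_dvd_right (Rk k) W) (ZMod (Nat.gcd (Rk k) W)) n
        = (s : ZMod (Nat.gcd (Rk k) W))) :
    ∃ b : Fin s → ZMod W,
      (∀ i, b i ∈ Zset k W) ∧ (∑ i, b i = n) ∧
      (∀ i, 0 < f (b i)) ∧ (s : ℝ) / 2 < ∑ i, f (b i) := by
  set s₀ := 8 * k * k.primeFactors.card + 2 * k + 2 with hs₀def
  have hs₀2 : 2 ≤ s₀ := by omega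
  obtain ⟨t, rfl⟩ : ∃ t, s = t + s₀ := ⟨s - s₀, by omega⟩
  have hts : s₀ ≤ t := by omega
  set φ := ZMod.castHom (Nat.gcd_dvd_right (Rk k) W) (ZMod (Nat.gcd (Rk k) W)) with hφ
  set ZF := (Set.toFinite (Zset k W)).toFinset with hZFdef
  have hmem : ∀ x, x ∈ ZF ↔ x ∈ Zset k W := fun x => Set.Finite.mem_toFinset _
  have hone : (1 : ZMod W) ∈ Zset k W := ⟨⟨1, one_pow k⟩, isUnit_one⟩
  have hZFne : ZF.Nonempty := ⟨1, (hmem 1).mpr hone⟩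
  have hncard : (Zset k W).ncard = ZF.card := Set.ncard_eq_toFinset_card _ _
  have hcardpos : 0 < ZF.card := Finset.card_pos.mpr hZFne
  have hcardR : (0:ℝ) < ZF.card := by exact_mod_cast hcardpos
  have hhalf : ((Zset k W).ncard : ℝ) / 2 < ((Zset k W).ncard : ℝ) := by
    rw [hncard]; linarith
  -- every element of Zset is ≡ 1 mod gcd(Rk,W)
  have hcast1 : ∀ b ∈ Zset k W, φ b = 1 := by
    intro b hb
    have h1 := hWaring s₀ le_rfl (Zset k W) subset_rfl hhalf
    have h2 := hWaring (s₀+1) (by omega) (Zset k W) subset_rfl hhalf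
    have m1 : s₀ • b ∈ sumset W s₀ (Zset k W) :=
      ⟨fun _ => b, fun _ => hb, by simp⟩
    have m2 : (s₀+1) • b ∈ sumset W (s₀+1) (Zset k W) :=
      ⟨fun _ => b, fun _ => hb, by simp⟩
    rw [h1] at m1
    rw [h2] at m2
    simp only [Set.mem_setOf_eq, map_nsmul, nsmul_eq_mul, map_mul, map_natCast, ← hφ] at m1 m2
    push_cast at m1 m2
    linear_combination m2 - m1
  -- max of f
  obtain ⟨b0, hb0F, hb0max⟩ := ZF.exists_max_image f hZFne
  have hb0Z : b0 ∈ Zset k W := (hmem b0).mp hb0F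
  have hμ1 : f b0 < 1 := hf1 b0 hb0Z
  have hsumZ : (ZF.card : ℝ)/2 < ∑ b ∈ ZF, f b := by
    rw [hncard, lt_div_iff₀ hcardR] at hmean
    linarith
  have hμhalf : 1/2 < f b0 := by
    have hle : ∑ b ∈ ZF, f b ≤ ZF.card • f b0 :=
      Finset.sum_le_card_nsmul _ _ _ (fun x hx => hb0max x hx)
    rw [nsmul_eq_mul] at hle
    nlinarith
  -- the large set A
  set AF := ZF.filter (fun b => 1 - f b0 < f b) with hAFdef
  have hAFcard : (ZF.card : ℝ) / 2 < AF.card := by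
    by_contra hcon
    push_neg at hcon
    have hsplit := Finset.sum_filter_add_sum_filter_not ZF (fun b => 1 - f b0 < f b) f
    have hc : AF.card + (ZF.filter (fun b => ¬ (1 - f b0 < f b))).card = ZF.card := by
      rw [hAFdef]; exact Finset.card_filter_add_card_filter_not _
    have h1 : ∑ b ∈ AF, f b ≤ AF.card • f b0 :=
      Finset.sum_le_card_nsmul _ _ _
        (fun x hx => hb0max x (Finset.mem_filter.mp hx).1)
    have h2 : ∑ b ∈ ZF.filter (fun b => ¬ (1 - f b0 < f b)), f b
        ≤ (ZF.filter (fun b => ¬ (1 - f b0 < f b))).card • (1 - f b0) :=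
      Finset.sum_le_card_nsmul _ _ _
        (fun x hx => le_of_not_gt (Finset.mem_filter.mp hx).2)
    rw [nsmul_eq_mul] at h1 h2
    have hcR : (AF.card : ℝ) + (ZF.filter (fun b => ¬ (1 - f b0 < f b))).card = ZF.card := by
      exact_mod_cast congrArg (Nat.cast (R := ℝ)) hc
    have hda : (AF.card : ℝ) ≤ (ZF.filter (fun b => ¬ (1 - f b0 < f b))).card := by linarith
    nlinarith [mul_nonneg (sub_nonneg.mpr hda) (by linarith : (0:ℝ) ≤ f b0 - 1/2)]
  have hAFsub : (↑AF : Set (ZMod W)) ⊆ Zset k W := by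
    intro x hx
    exact (hmem x).mp (Finset.mem_filter.mp hx).1
  have hAFn : ((Zset k W).ncard : ℝ)/2 < (((↑AF : Set (ZMod W)).ncard : ℝ)) := by
    rw [Set.ncard_coe_finset, hncard]; exact hAFcard
  have hWA := hWaring s₀ le_rfl (↑AF) hAFsub hAFn
  have hn' : φ (n - t • b0) = ((s₀ : ℕ) : ZMod (Nat.gcd (Rk k) W)) := by
    rw [map_sub, map_nsmul, hcast1 b0 hb0Z, hn]
    push_cast
    ring
  have hmem' : (n - t • b0) ∈ sumset W s₀ (↑AF : Set (ZMod W)) := by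
    rw [hWA]; exact hn'
  obtain ⟨c, hcA, hcsum⟩ := hmem'
  have hcAF : ∀ j, c j ∈ AF := fun j => hcA j
  have hfc : ∀ j, 1 - f b0 < f (c j) := fun j => (Finset.mem_filter.mp (hcAF j)).2
  have hcZ : ∀ j, c j ∈ Zset k W := fun j => (hmem _).mp (Finset.mem_filter.mp (hcAF j)).1
  refine ⟨Fin.append (fun _ : Fin t => b0) c, ?_, ?_, ?_, ?_⟩
  · intro i
    induction i using Fin.addCases with
    | left i => simpa [Fin.append_left] using hb0Z
    | right i => simpa [Fin.append_right] using hcZ i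
  · rw [Fin.sum_univ_add]
    simp only [Fin.append_left, Fin.append_right]
    rw [Finset.sum_const, Finset.card_univ, Fintype.card_fin, hcsum]
    abel
  · intro i
    induction i using Fin.addCases with
    | left i => simp only [Fin.append_left]; linarith
    | right i => simp only [Fin.append_right]; have := hfc i; linarith
  · rw [Fin.sum_univ_add]
    simp only [Fin.append_left, Fin.append_right]
    rw [Finset.sum_const, Finset.card_univ, Fintype.card_fin, nsmul_eq_mul]
    have hlow : (s₀ : ℝ) * (1 - f b0) < ∑ j : Fin s₀, f (c j) := by
      have hne : (Finset.univ : Finset (Fin s₀)).Nonempty :=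
        ⟨⟨0, by omega⟩, Finset.mem_univ _⟩
      calc (s₀ : ℝ) * (1 - f b0)
          = ∑ _j : Fin s₀, (1 - f b0) := by
            rw [Finset.sum_const, Finset.card_univ, Fintype.card_fin, nsmul_eq_mul]
        _ < ∑ j : Fin s₀, f (c j) :=
            Finset.sum_lt_sum_of_nonempty hne (fun j _ => hfc j)
    have htR : (s₀ : ℝ) ≤ (t : ℝ) := by exact_mod_cast hts
    push_cast at hlow htR ⊢
    nlinarith [mul_nonneg (sub_nonneg.mpr htR) (by linarith : (0:ℝ) ≤ f b0 - 1/2)]
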